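/- arXiv:2303.06759 — 5 statements merged into one kernel-verified Lean document; each statement's English description precedes it below -/
import Mathlib

section
/- Let p₀, p₁, …, p_{n+1} be points in ℝ^d with p₁, …, p_n obtained by projecting p₀ onto regions R₁, …, R_n (so ‖pᵢ − p₀‖ ≤ dist(p₀, Rᵢ)). If OPT is the length of any tour q₀ = p₀, q₁ ∈ R₁, …, q_n ∈ R_n, q_{n+1} = p_{n+1}, then ∑_{i=0}^{n} ‖p_{i+1} − p_i‖ ≤ (2n+1)·OPT, where OPT = ∑_{i=0}^{n} ‖q_{i+1} − q_i‖. -/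
/-- The trivial `(2n+1)`-approximation: projecting the starting point onto each
region yields a tour of length at most `(2n+1)` times the optimum. -/
theorem trivial_projection_approx {d n : ℕ}
    (R : ℕ → Set (EuclideanSpace ℝ (Fin d)))
    (hRne : ∀ i, 1 ≤ i → i ≤ n → (R i).Nonempty)
    (hRcl : ∀ i, 1 ≤ i → i ≤ n → IsClosed (R i))
    (p q : ℕ → EuclideanSpace ℝ (Fin d))
    (h0 : p 0 = q 0) (hend : p (n + 1) = q (n + 1))
    (hq : ∀ i, 1 ≤ i → i ≤ n → q i ∈ R i)
    (hp : ∀ i, 1 ≤ i → i ≤ n →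
      p i ∈ R i ∧ ‖p i - p 0‖ ≤ Metric.infDist (p 0) (R i)) :
    ∑ i ∈ Finset.range (n + 1), ‖p (i + 1) - p i‖ ≤
      (2 * n + 1) * ∑ i ∈ Finset.range (n + 1), ‖q (i + 1) - q i‖ := by
  set O := ∑ i ∈ Finset.range (n + 1), ‖q (i + 1) - q i‖ with hO
  have hA : ∀ k, k ≤ n + 1 → ‖q k - q 0‖ ≤ O := by
    intro k hk
    have h1 : q k - q 0 = ∑ i ∈ Finset.range k, (q (i + 1) - q i) :=
      (Finset.sum_range_sub q k).symm
    calc ‖q k - q 0‖ = ‖∑ i ∈ Finset.range k, (q (i + 1) - q i)‖ := by rw [h1]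
      _ ≤ ∑ i ∈ Finset.range k, ‖q (i + 1) - q i‖ := norm_sum_le _ _
      _ ≤ O := Finset.sum_le_sum_of_subset_of_nonneg
          (Finset.range_subset_range.2 hk) (fun i _ _ => norm_nonneg _)
  have hB : ∀ j, 1 ≤ j → j ≤ n + 1 → ‖p j - p 0‖ ≤ O := by
    intro j h1 h2
    rcases Nat.lt_or_ge j (n + 1) with h | h
    · have hj : j ≤ n := Nat.lt_succ_iff.mp h
      have h3 := (hp j h1 hj).2
      have hle : Metric.infDist (p 0) (R j) ≤ dist (p 0) (q j) :=
        Metric.infDist_le_dist_of_mem (hq j h1 hj)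
      have h4 : ‖p j - p 0‖ ≤ dist (p 0) (q j) := le_trans h3 hle
      calc ‖p j - p 0‖ ≤ dist (p 0) (q j) := h4
        _ = ‖q 0 - q j‖ := by rw [h0, dist_eq_norm]
        _ = ‖q j - q 0‖ := norm_sub_rev _ _
        _ ≤ O := hA j h2
    · have hj : j = n + 1 := le_antisymm h2 h
      subst hj
      rw [hend, h0]
      exact hA _ le_rfl
  have hterm : ∀ i ∈ Finset.range (n + 1),
      ‖p (i + 1) - p i‖ ≤ (if i = 0 then O else 2 * O) := by
    intro i hi
    have hi' : i ≤ n := Nat.lt_succ_iff.mp (Finset.mem_range.mp hi)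
    by_cases h : i = 0
    · subst h
      simpa using hB 1 le_rfl (by omega)
    · simp only [if_neg h]
      have h1 : 1 ≤ i := Nat.one_le_iff_ne_zero.mpr h
      have key : ‖p (i + 1) - p i‖ ≤ ‖p (i + 1) - p 0‖ + ‖p i - p 0‖ := by
        have e : p (i + 1) - p i = (p (i + 1) - p 0) - (p i - p 0) := by abel
        rw [e]; exact norm_sub_le _ _
      have b1 := hB (i + 1) (by omega) (by omega)
      have b2 := hB i h1 (by omega)
      linarith
  calc ∑ i ∈ Finset.range (n + 1), ‖p (i + 1) - p i‖
      ≤ ∑ i ∈ Finset.range (n + 1), (if i = 0 then O else 2 * O) :=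
        Finset.sum_le_sum hterm
    _ = (2 * n + 1) * O := by
        rw [Finset.sum_range_succ']
        simp [Finset.sum_const]
        ring
end

section
/- For p₀ = (−1, 1), p₂ = (1, 1), and any d with 0 ≤ d ≤ 1, the point p₁' = (d, 0) satisfies ‖p₀ − p₁'‖ + ‖p₁' − p₂‖ ≤ 2√2·(1 + d²). -/
/-- Perturbing the optimal reflection point `(0,0)` to `(d,0)` with `0 ≤ d ≤ 1`
incurs only `O(d²)` multiplicative error:
`‖p₀ - (d,0)‖ + ‖(d,0) - p₂‖ ≤ 2√2 (1 + d²)`. -/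
theorem reflection_perturbation_bound (d : ℝ) (hd0 : 0 ≤ d) (hd1 : d ≤ 1) :
    ‖(WithLp.equiv 2 (Fin 2 → ℝ)).symm ![(-1 : ℝ), 1] -
        (WithLp.equiv 2 (Fin 2 → ℝ)).symm ![d, 0]‖ +
      ‖(WithLp.equiv 2 (Fin 2 → ℝ)).symm ![d, 0] -
        (WithLp.equiv 2 (Fin 2 → ℝ)).symm ![(1 : ℝ), 1]‖ ≤
      2 * Real.sqrt 2 * (1 + d ^ 2) := by
  have h1 : ‖(WithLp.equiv 2 (Fin 2 → ℝ)).symm ![(-1 : ℝ), 1] -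
      (WithLp.equiv 2 (Fin 2 → ℝ)).symm ![d, 0]‖ = Real.sqrt (2 + 2*d + d^2) := by
    rw [EuclideanSpace.norm_eq]
    simp [Fin.sum_univ_two]
    ring_nf
  have h2 : ‖(WithLp.equiv 2 (Fin 2 → ℝ)).symm ![d, 0] -
      (WithLp.equiv 2 (Fin 2 → ℝ)).symm ![(1 : ℝ), 1]‖ = Real.sqrt (2 - 2*d + d^2) := by
    rw [EuclideanSpace.norm_eq]
    simp [Fin.sum_univ_two]
    ring_nf
  rw [h1, h2]
  set a := Real.sqrt (2 + 2*d + d^2) with ha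
  set b := Real.sqrt (2 - 2*d + d^2) with hb
  have ha2 : a^2 = 2 + 2*d + d^2 := Real.sq_sqrt (by nlinarith)
  have hb2 : b^2 = 2 - 2*d + d^2 := Real.sq_sqrt (by nlinarith)
  have han : 0 ≤ a := Real.sqrt_nonneg _
  have hbn : 0 ≤ b := Real.sqrt_nonneg _
  have hab : a * b = Real.sqrt (4 + d^4) := by
    rw [ha, hb, ← Real.sqrt_mul (by nlinarith)]
    ring_nf
  have hc2 : (Real.sqrt (4 + d^4))^2 = 4 + d^4 := Real.sq_sqrt (by positivity)
  have hcn : 0 ≤ Real.sqrt (4 + d^4) := Real.sqrt_nonneg _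
  have hcle : Real.sqrt (4 + d^4) ≤ 2 + d^4 := by
    have h := Real.sqrt_le_sqrt (show 4 + d^4 ≤ (2 + d^4)^2 by nlinarith [sq_nonneg (d^4)])
    rwa [Real.sqrt_sq (by positivity)] at h
  have hs : Real.sqrt 2 ^ 2 = 2 := Real.sq_sqrt (by norm_num)
  have hsn : 0 < Real.sqrt 2 := Real.sqrt_pos.mpr (by norm_num)
  have key : (a + b)^2 ≤ (2 * Real.sqrt 2 * (1 + d^2))^2 := by
    have : (a + b)^2 = a^2 + b^2 + 2 * (a * b) := by ring
    rw [this, ha2, hb2, hab]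
    nlinarith [sq_nonneg d, sq_nonneg (d^2), sq_nonneg (d*(1-d))]
  have hRpos : 0 < 2 * Real.sqrt 2 * (1 + d^2) := by positivity
  nlinarith [key, hRpos, han, hbn]
end

section
/- Let C(q, m) be the closed disk of radius m centered at q in ℝ², and let R = C(r, ρ) be a closed disk with ρ ≥ 10m and q ∈ R. Then area(C(q, m) ∩ R) ≥ (arccos(1/20)/π) · area(C(q, m)). -/
open MeasureTheory Real Set
open scoped RealInnerProductSpace

lemma cos_cond_iff {φ : ℝ} (h1 : -π < φ) (h2 : φ < π) :
    1/20 ≤ Real.cos φ ↔ |φ| ≤ Real.arccos (1/20) := by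
  constructor
  · intro h
    have harc : Real.arccos (Real.cos φ) = |φ| := by
      rcases le_or_gt 0 φ with hφ | hφ
      · rw [abs_of_nonneg hφ, Real.arccos_cos hφ h2.le]
      · rw [abs_of_neg hφ, ← Real.cos_neg, Real.arccos_cos (by linarith) (by linarith)]
    rw [← harc]
    rw [Real.arccos_eq_pi_div_two_sub_arcsin, Real.arccos_eq_pi_div_two_sub_arcsin]
    have := Real.monotone_arcsin h
    linarith
  · intro h
    have hθπ : Real.arccos (1/20) ≤ π := Real.arccos_le_pi _
    have := Real.cos_le_cos_of_nonneg_of_le_pi (abs_nonneg φ) hθπ h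
    rw [Real.cos_abs, Real.cos_arccos (by norm_num) (by norm_num)] at this
    exact this

lemma sector_vol (m : ℝ) (hm : 0 ≤ m) :
    ENNReal.ofReal (Real.arccos (1/20) * m ^ 2) ≤
      volume {z : ℂ | ‖z‖ ≤ m ∧ ‖z‖ / 20 ≤ z.re} := by
  set θ := Real.arccos (1/20) with hθdef
  have hθ0 : 0 ≤ θ := Real.arccos_nonneg _
  have hθπ : θ < π / 2 := Real.arccos_lt_pi_div_two.2 (by norm_num)
  have hπ := Real.pi_pos
  set S := {z : ℂ | ‖z‖ ≤ m ∧ ‖z‖ / 20 ≤ z.re} with hSdef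
  have hclosed : IsClosed S := by
    rw [hSdef, setOf_and]
    exact (isClosed_le continuous_norm continuous_const).inter
      (isClosed_le (continuous_norm.div_const 20) Complex.continuous_re)
  have hmeas := hclosed.measurableSet
  set A : Set (ℝ × ℝ) := Set.Ioc 0 m ×ˢ Set.Icc (-θ) θ with hAdef
  have hAmeas : MeasurableSet A := measurableSet_Ioc.prod measurableSet_Icc
  have hAsub : A ⊆ polarCoord.target := by
    rintro ⟨R, φ⟩ ⟨hR, hφ⟩
    rw [polarCoord_target]
    exact ⟨hR.1, by constructor <;> [linarith [hφ.1]; linarith [hφ.2]]⟩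
  have key : (volume S).toReal = θ * m ^ 2 := by
    have h1 : (volume S).toReal = ∫ z, S.indicator (fun _ => (1:ℝ)) z := by
      rw [integral_indicator hmeas, setIntegral_const, smul_eq_mul, mul_one]; rfl
    have h2 : EqOn (fun p : ℝ × ℝ => p.1 • S.indicator (fun _ => (1:ℝ)) (Complex.polarCoord.symm p))
        (A.indicator (fun p : ℝ × ℝ => p.1)) polarCoord.target := by
      rintro ⟨R, φ⟩ hp
      rw [polarCoord_target] at hp
      obtain ⟨hR, hφ⟩ := hp
      have hR0 : (0:ℝ) < R := hR
      have habs : ‖Complex.polarCoord.symm (R, φ)‖ = R := by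
        rw [Complex.norm_polarCoord_symm]; exact abs_of_pos hR0
      have hre : (Complex.polarCoord.symm (R, φ)).re = R * Real.cos φ := by
        rw [Complex.polarCoord_symm_apply]; simp [Complex.cos_ofReal_re]
      have hmem : Complex.polarCoord.symm (R, φ) ∈ S ↔ (R, φ) ∈ A := by
        simp only [hSdef, Set.mem_setOf_eq, habs, hre, hAdef,
          Set.mem_prod, Set.mem_Ioc, Set.mem_Icc]
        constructor
        · rintro ⟨hm1, hm2⟩
          have hcos : 1/20 ≤ Real.cos φ := by
            have h' : R * (1/20) ≤ R * Real.cos φ := by linarith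
            exact le_of_mul_le_mul_left h' hR0
          have := (cos_cond_iff hφ.1 hφ.2).1 hcos
          exact ⟨⟨hR0, hm1⟩, abs_le.1 this⟩
        · rintro ⟨⟨hR0', hRm⟩, hφθ⟩
          have hcos : 1/20 ≤ Real.cos φ := (cos_cond_iff hφ.1 hφ.2).2 (abs_le.2 hφθ)
          exact ⟨hRm, by nlinarith⟩
      by_cases h : (R, φ) ∈ A
      · simp only [Set.indicator_of_mem h, Set.indicator_of_mem (hmem.2 h), smul_eq_mul, mul_one]
      · simp only [Set.indicator_of_notMem h,
          Set.indicator_of_notMem (fun hx => h (hmem.1 hx)), smul_eq_mul, mul_zero]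
    have h3 : ∫ p in A, (p.1 : ℝ) =
        (∫ x in Set.Ioc (0:ℝ) m, x) * ∫ y in Set.Icc (-θ) θ, (1:ℝ) := by
      have := setIntegral_prod_mul (μ := volume) (ν := volume) (fun x : ℝ => x)
        (fun _ : ℝ => (1:ℝ)) (Set.Ioc (0:ℝ) m) (Set.Icc (-θ) θ)
      simpa [← Measure.volume_eq_prod, hAdef, mul_one] using this
    have e1 : ∫ x in Set.Ioc (0:ℝ) m, (x:ℝ) = m^2/2 := by
      rw [← intervalIntegral.integral_of_le hm, integral_id]; ring
    have e2 : ∫ y in Set.Icc (-θ) θ, (1:ℝ) = 2*θ := by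
      rw [setIntegral_const, smul_eq_mul, mul_one, Real.volume_real_Icc_of_le (by linarith)]
      ring
    rw [h1, ← Complex.integral_comp_polarCoord_symm (fun z => S.indicator (fun _ => (1:ℝ)) z),
      setIntegral_congr_fun polarCoord.open_target.measurableSet h2,
      setIntegral_indicator hAmeas, Set.inter_eq_self_of_subset_right hAsub, h3, e1, e2]
    ring
  refine ENNReal.ofReal_le_of_le_toReal ?_
  rw [key]

/-- Area of intersection of a small disk with a big disk containing its center:
if `ρ ≥ 10m` and `q ∈ C(r, ρ)`, then
`area(C(q,m) ∩ C(r,ρ)) ≥ (arccos(1/20)/π) · area(C(q,m))`. -/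
theorem disk_intersection_area (q r : EuclideanSpace ℝ (Fin 2)) (m ρ : ℝ)
    (hm : 0 < m) (hρ : 10 * m ≤ ρ) (hq : ‖q - r‖ ≤ ρ) :
    ENNReal.ofReal (Real.arccos (1 / 20) / Real.pi) *
        MeasureTheory.volume (Metric.closedBall q m) ≤
      MeasureTheory.volume (Metric.closedBall q m ∩ Metric.closedBall r ρ) := by
  have hπ := Real.pi_pos
  set θ := Real.arccos (1/20) with hθdef
  have hθ0 : 0 ≤ θ := Real.arccos_nonneg _
  have hθπ : θ ≤ π := Real.arccos_le_pi _
  set e : ℂ ≃ₗᵢ[ℝ] EuclideanSpace ℝ (Fin 2) :=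
    Complex.isometryOfOrthonormal ((stdOrthonormalBasis ℝ (EuclideanSpace ℝ (Fin 2))).reindex (finCongr finrank_euclideanSpace_fin)) with hedef
  have hball : volume (Metric.closedBall q m) = ENNReal.ofReal (π * m ^ 2) := by
    have hpre : (e : ℂ → EuclideanSpace ℝ (Fin 2)) ⁻¹' Metric.closedBall q m
        = Metric.closedBall (e.symm q) m := by
      ext z
      simp only [Set.mem_preimage, Metric.mem_closedBall]
      rw [← e.apply_symm_apply q, e.dist_map, e.apply_symm_apply]
    rw [← e.measurePreserving.measure_preimage
        measurableSet_closedBall.nullMeasurableSet, hpre,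
      Complex.volume_closedBall]
    rw [← ENNReal.ofReal_pow hm.le, ← ENNReal.ofReal_coe_nnreal, NNReal.coe_real_pi,
      ← ENNReal.ofReal_mul (by positivity)]
    ring_nf
  have hLHS : ENNReal.ofReal (θ / π) * volume (Metric.closedBall q m)
      = ENNReal.ofReal (θ * m ^ 2) := by
    rw [hball, ← ENNReal.ofReal_mul (by positivity)]
    congr 1
    field_simp
  rw [hLHS]
  by_cases hrq : r = q
  · rw [hrq]
    have heq : Metric.closedBall q m ∩ Metric.closedBall q ρ = Metric.closedBall q m := by
      rw [Set.inter_eq_self_of_subset_left]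
      exact Metric.closedBall_subset_closedBall (by linarith)
    rw [heq, hball]
    exact ENNReal.ofReal_le_ofReal (by nlinarith)
  · set d := ‖r - q‖ with hddef
    have hd0 : 0 < d := norm_pos_iff.2 (sub_ne_zero.2 hrq)
    have hdρ : d ≤ ρ := by rwa [hddef, norm_sub_rev]
    set T : Set (EuclideanSpace ℝ (Fin 2)) :=
      {a | ‖a - q‖ ≤ m ∧ ‖a - q‖ * d / 20 ≤ ⟪a - q, r - q⟫} with hTdef
    have hTsub : T ⊆ Metric.closedBall q m ∩ Metric.closedBall r ρ := by
      rintro a ⟨h1, h2⟩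
      refine ⟨by simpa [Metric.mem_closedBall, dist_eq_norm] using h1, ?_⟩
      rw [Metric.mem_closedBall, dist_eq_norm]
      have hexp : ‖a - r‖ ^ 2 = ‖a - q‖ ^ 2 - 2 * ⟪a - q, r - q⟫ + d ^ 2 := by
        have h4 : a - r = (a - q) - (r - q) := by abel
        rw [h4, norm_sub_sq_real]
      nlinarith [norm_nonneg (a - r), norm_nonneg (a - q),
        mul_nonneg (sub_nonneg.2 hdρ) (by linarith : (0:ℝ) ≤ ρ + d - ‖a - q‖/10),
        mul_nonneg (norm_nonneg (a - q)) (by linarith : (0:ℝ) ≤ ρ/10 - ‖a - q‖)]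
    have hTclosed : IsClosed T := by
      rw [hTdef, setOf_and]
      refine IsClosed.inter (isClosed_le (by fun_prop) continuous_const)
        (isClosed_le (by fun_prop) ?_)
      exact (continuous_id.sub continuous_const).inner continuous_const
    set w : ℂ := e.symm (r - q) with hwdef
    have hw : ‖w‖ = d := by
      rw [hwdef, e.symm.norm_map]
    set c : Circle := ⟨w / d, mem_sphere_zero_iff_norm.2 (by
      rw [norm_div, hw, Complex.norm_real,
        Real.norm_eq_abs, abs_of_pos hd0, div_self hd0.ne'])⟩ with hcdef
    set g : ℂ ≃ₗᵢ[ℝ] EuclideanSpace ℝ (Fin 2) := (rotation c).trans e with hgdef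
    set φmap : ℂ → EuclideanSpace ℝ (Fin 2) := fun z => g z + q with hφdef
    have hmp : MeasurePreserving φmap volume volume :=
      (measurePreserving_add_right volume q).comp g.measurePreserving
    have hpre : φmap ⁻¹' T = {z : ℂ | ‖z‖ ≤ m ∧ ‖z‖ / 20 ≤ z.re} := by
      ext z
      have hsub : φmap z - q = e ((w / ↑d) * z) := by
        simp [hφdef, hgdef, rotation_apply, hcdef]; rfl
      have hnorm : ‖φmap z - q‖ = ‖z‖ := by
        rw [hsub, e.norm_map, norm_mul, norm_div, hw,
          Complex.norm_real, Real.norm_eq_abs, abs_of_pos hd0, div_self hd0.ne', one_mul]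
      have hinner : ⟪φmap z - q, r - q⟫ = d * z.re := by
        rw [hsub, ← e.apply_symm_apply (r - q), ← hwdef, e.inner_map_map, Complex.inner]
        have hcw : (starRingEnd ℂ) w * w = (((d:ℝ)^2 : ℝ) : ℂ) := by
          rw [mul_comm, Complex.mul_conj]
          norm_cast
          rw [Complex.normSq_eq_norm_sq, hw]
        have hd : ((d:ℝ):ℂ) ≠ 0 := by exact_mod_cast hd0.ne'
        have hrewrite : (starRingEnd ℂ) (w / ↑d * z) * w = ((d:ℝ):ℂ) * (starRingEnd ℂ) z := by
          rw [map_mul, map_div₀, Complex.conj_ofReal]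
          field_simp
          rw [mul_comm ((starRingEnd ℂ) w) ((starRingEnd ℂ) z), mul_assoc, hcw]
          push_cast
          ring
        rw [mul_comm w, hrewrite]
        simp [Complex.conj_re]
      simp only [Set.mem_preimage, hTdef, Set.mem_setOf_eq, hnorm, hinner]
      refine and_congr_right fun _ => ?_
      rw [show ‖z‖ * d / 20 = d * (‖z‖ / 20) by ring]
      exact mul_le_mul_iff_right₀ hd0
    calc ENNReal.ofReal (θ * m ^ 2)
        ≤ volume {z : ℂ | ‖z‖ ≤ m ∧ ‖z‖ / 20 ≤ z.re} := sector_vol m hm.le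
      _ = volume (φmap ⁻¹' T) := by rw [hpre]
      _ = volume T := hmp.measure_preimage hTclosed.measurableSet.nullMeasurableSet
      _ ≤ _ := measure_mono hTsub
end

section
/- For every n ≥ 1 there exist x₁, …, x_n ∈ [0, 8] such that the disks D_i of radius 1/i tangent to the x-axis from above at (x_i, 1/i) (i.e., centered at (x_i, 1/i)) are pairwise disjoint. -/
open MeasureTheory Metric Finset

private noncomputable def rr (k : ℕ) : ℝ := 1 / (k + 1)

private lemma rr_pos (k : ℕ) : 0 < rr k := by simp only [rr]; positivity

private lemma sum_inv_sqrt (n : ℕ) :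
    ∑ k ∈ Finset.range n, 1 / Real.sqrt (k + 1) ≤ 2 * Real.sqrt n := by
  induction n with
  | zero => simp
  | succ n ih =>
    rw [Finset.sum_range_succ]
    have h1 : Real.sqrt (n + 1) > 0 := by positivity
    have key : 1 / Real.sqrt (n + 1) ≤ 2 * Real.sqrt (n + 1) - 2 * Real.sqrt n := by
      rw [div_le_iff₀ h1]
      have hs : Real.sqrt n * Real.sqrt (n+1) ≥ Real.sqrt n * Real.sqrt n := by
        apply mul_le_mul_of_nonneg_left _ (Real.sqrt_nonneg _)
        exact Real.sqrt_le_sqrt (by linarith)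
      have hn : Real.sqrt n * Real.sqrt n = (n : ℝ) := Real.mul_self_sqrt (by positivity)
      have hn1 : Real.sqrt (n+1) * Real.sqrt (n+1) = (n : ℝ) + 1 :=
        Real.mul_self_sqrt (by positivity)
      nlinarith
    push_cast
    linarith

private lemma exists_config (n : ℕ) :
    ∃ x : ℕ → ℝ, ∀ i < n, x i ∈ Set.Icc (0 : ℝ) 8 ∧
      ∀ j < i, 4 * rr i * rr j ≤ (x i - x j) ^ 2 := by
  induction n with
  | zero => exact ⟨fun _ => 0, fun i hi => absurd hi (Nat.not_lt_zero i)⟩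
  | succ n ih =>
    obtain ⟨x, hx⟩ := ih
    -- the forbidden set
    set S : Set ℝ := ⋃ j ∈ Finset.range n, closedBall (x j) (2 * Real.sqrt (rr n * rr j)) with hS
    have hsum : ∑ j ∈ Finset.range n, (4 * Real.sqrt (rr n * rr j)) < 8 := by
      have heq : ∀ j ∈ Finset.range n, 4 * Real.sqrt (rr n * rr j)
          = (4 * Real.sqrt (rr n)) * (1 / Real.sqrt (j + 1)) := by
        intro j _
        rw [Real.sqrt_mul (le_of_lt (rr_pos n))]
        have : Real.sqrt (rr j) = 1 / Real.sqrt (j + 1) := by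
          rw [rr, one_div, one_div, Real.sqrt_inv]
        rw [this]; ring
      rw [Finset.sum_congr rfl heq, ← Finset.mul_sum]
      have h1 : (0:ℝ) < Real.sqrt (rr n) := Real.sqrt_pos.2 (rr_pos n)
      have h2 := sum_inv_sqrt n
      have h3 : Real.sqrt (rr n) = 1 / Real.sqrt (n + 1) := by
        rw [rr, one_div, one_div, Real.sqrt_inv]
      have hlt : Real.sqrt (n : ℝ) < Real.sqrt ((n : ℝ) + 1) :=
        Real.sqrt_lt_sqrt (by positivity) (by linarith)
      have hp : (0:ℝ) < Real.sqrt ((n:ℝ) + 1) := by positivity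
      calc (4 * Real.sqrt (rr n)) * ∑ j ∈ Finset.range n, 1 / Real.sqrt (j + 1)
          ≤ (4 * Real.sqrt (rr n)) * (2 * Real.sqrt n) := by
            apply mul_le_mul_of_nonneg_left h2 (by positivity)
        _ = 8 * (Real.sqrt n / Real.sqrt ((n:ℝ) + 1)) := by rw [h3]; ring
        _ < 8 := by
            have : Real.sqrt (n : ℝ) / Real.sqrt ((n:ℝ) + 1) < 1 :=
              (div_lt_one hp).2 hlt
            linarith
    have hvol : volume S < volume (Set.Icc (0:ℝ) 8) := by
      calc volume S ≤ ∑ j ∈ Finset.range n, volume (closedBall (x j) (2 * Real.sqrt (rr n * rr j))) :=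
            measure_biUnion_finset_le _ _
        _ = ∑ j ∈ Finset.range n, ENNReal.ofReal (4 * Real.sqrt (rr n * rr j)) := by
            apply Finset.sum_congr rfl; intro j _
            rw [Real.volume_closedBall]; ring_nf
        _ = ENNReal.ofReal (∑ j ∈ Finset.range n, 4 * Real.sqrt (rr n * rr j)) := by
            rw [ENNReal.ofReal_sum_of_nonneg]; intro j _; positivity
        _ < ENNReal.ofReal 8 := (ENNReal.ofReal_lt_ofReal_iff (by norm_num)).2 hsum
        _ = volume (Set.Icc (0:ℝ) 8) := by rw [Real.volume_Icc]; norm_num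
    have hns : ¬ Set.Icc (0:ℝ) 8 ⊆ S := by
      intro h
      exact absurd (measure_mono h) (not_le.2 hvol)
    obtain ⟨p, hp1, hp2⟩ := Set.not_subset.1 hns
    refine ⟨Function.update x n p, fun i hi => ?_⟩
    rcases Nat.lt_succ_iff_lt_or_eq.1 hi with hi' | rfl
    · constructor
      · rw [Function.update_of_ne (Nat.ne_of_lt hi')]
        exact (hx i hi').1
      · intro j hj
        rw [Function.update_of_ne (Nat.ne_of_lt hi'),
          Function.update_of_ne (Nat.ne_of_lt (hj.trans hi'))]
        exact (hx i hi').2 j hj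
    · constructor
      · rw [Function.update_self]; exact hp1
      · intro j hj
        rw [Function.update_self, Function.update_of_ne (Nat.ne_of_lt hj)]
        have hpj : p ∉ closedBall (x j) (2 * Real.sqrt (rr i * rr j)) := by
          intro hmem
          exact hp2 (Set.mem_biUnion (Finset.mem_range.2 hj) hmem)
        rw [mem_closedBall, Real.dist_eq, not_le] at hpj
        have h1 : (2 * Real.sqrt (rr i * rr j)) ^ 2 ≤ |p - x j| ^ 2 := by
          apply pow_le_pow_left₀ (by positivity) (le_of_lt hpj)
        rw [sq_abs] at h1
        have h2 : (2 * Real.sqrt (rr i * rr j)) ^ 2 = 4 * rr i * rr j := by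
          rw [mul_pow, Real.sq_sqrt (mul_pos (rr_pos i) (rr_pos j)).le]; ring
        linarith

private lemma disjoint_balls (a b ra rb : ℝ) (hra : 0 < ra) (hrb : 0 < rb)
    (h : 4 * ra * rb ≤ (a - b) ^ 2) :
    Disjoint
      (Metric.ball ((WithLp.equiv 2 (Fin 2 → ℝ)).symm ![a, ra]) ra)
      (Metric.ball ((WithLp.equiv 2 (Fin 2 → ℝ)).symm ![b, rb]) rb) := by
  apply ball_disjoint_ball
  rw [EuclideanSpace.dist_eq]
  simp only [WithLp.equiv_symm_apply, WithLp.ofLp_toLp]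
  rw [Fin.sum_univ_two]
  simp only [Matrix.cons_val_zero, Matrix.cons_val_one, Matrix.head_cons, Real.dist_eq]
  rw [← Real.sqrt_sq (by positivity : (0:ℝ) ≤ ra + rb)]
  apply Real.sqrt_le_sqrt
  rw [sq_abs, sq_abs]
  nlinarith

/-- For every `n ≥ 1` there are abscissas `x₁, …, xₙ ∈ [0,8]` such that the disks
of radius `1/i` tangent to the x-axis from above at `(xᵢ, 1/i)` (centered at
`(xᵢ, 1/i)`) are pairwise disjoint (have pairwise disjoint interiors). -/
theorem tangent_disks_construction (n : ℕ) (hn : 1 ≤ n) :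
    ∃ x : Fin n → ℝ, (∀ i, x i ∈ Set.Icc (0 : ℝ) 8) ∧
      Pairwise fun i j : Fin n =>
        Disjoint
          (Metric.ball ((WithLp.equiv 2 (Fin 2 → ℝ)).symm
            ![x i, 1 / ((i : ℕ) + 1 : ℝ)]) (1 / ((i : ℕ) + 1 : ℝ)))
          (Metric.ball ((WithLp.equiv 2 (Fin 2 → ℝ)).symm
            ![x j, 1 / ((j : ℕ) + 1 : ℝ)]) (1 / ((j : ℕ) + 1 : ℝ))) := by
  obtain ⟨x, hx⟩ := exists_config n
  refine ⟨fun i => x i, fun i => (hx i i.isLt).1, ?_⟩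
  have key : ∀ i j : Fin n, (j : ℕ) < (i : ℕ) →
      Disjoint
        (Metric.ball ((WithLp.equiv 2 (Fin 2 → ℝ)).symm
          ![x i, 1 / ((i : ℕ) + 1 : ℝ)]) (1 / ((i : ℕ) + 1 : ℝ)))
        (Metric.ball ((WithLp.equiv 2 (Fin 2 → ℝ)).symm
          ![x j, 1 / ((j : ℕ) + 1 : ℝ)]) (1 / ((j : ℕ) + 1 : ℝ))) := by
    intro i j hij
    exact disjoint_balls _ _ _ _ (rr_pos i) (rr_pos j) ((hx i i.isLt).2 j hij)
  intro i j hij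
  rcases lt_or_gt_of_ne (fun h : (i:ℕ) = (j:ℕ) => hij (Fin.ext h)) with h | h
  · exact (key j i h).symm
  · exact key i j h
end

section
/- Let C be a nonempty closed convex subset of the closed hypercube H = [0, r]^d, let S_H be a finite set of points on ∂H such that every point of ∂H is within distance δ of S_H, and let S = {proj_C(s) : s ∈ S_H}. Then for every p ∈ ∂C there exists p' ∈ S with ‖p − p'‖ ≤ δ. -/
open scoped InnerProductSpace
set_option maxHeartbeats 1000000

private lemma proj_aux_lip {E : Type*} [NormedAddCommGroup E] [InnerProductSpace ℝ E]
    {C : Set E} (a b u w : E) (hu : u ∈ C) (hw : w ∈ C)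
    (ha : ∀ y ∈ C, ⟪a - u, y - u⟫_ℝ ≤ 0) (hb : ∀ y ∈ C, ⟪b - w, y - w⟫_ℝ ≤ 0) :
    ‖u - w‖ ≤ ‖a - b‖ := by
  have h1 := ha w hw
  have h2 := hb u hu
  have expand : ⟪a - u, w - u⟫_ℝ + ⟪b - w, u - w⟫_ℝ
      = ⟪a - b, w - u⟫_ℝ + ‖w - u‖ ^ 2 := by
    rw [← real_inner_self_eq_norm_sq]
    simp only [inner_sub_left, inner_sub_right, real_inner_comm u w]
    ring
  have key : ‖w - u‖ ^ 2 ≤ ⟪a - b, u - w⟫_ℝ := by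
    have : ⟪a - b, u - w⟫_ℝ = - ⟪a - b, w - u⟫_ℝ := by
      rw [← inner_neg_right]; congr 1; abel
    nlinarith [expand, h1, h2]
  have hle : ‖w - u‖ ^ 2 ≤ ‖a - b‖ * ‖u - w‖ :=
    key.trans (real_inner_le_norm _ _)
  rw [norm_sub_rev w u] at hle
  rcases eq_or_lt_of_le (norm_nonneg (u - w)) with h0 | h0
  · rw [← h0]; exact norm_nonneg _
  · nlinarith

/-- Equal spacing via closest-point projection: if `S_H` is a `δ`-cover of the
boundary of the hypercube `H = [0,r]^d` and `f` is the closest-point projection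
onto a nonempty closed convex `C ⊆ H`, then every boundary point of `C` is within
`δ` of the image `f '' S_H`. -/
theorem projection_equal_spacing {d : ℕ} (r δ : ℝ) (hr : 0 < r)
    (H : Set (EuclideanSpace ℝ (Fin d)))
    (hH : H = {x | ∀ i, x i ∈ Set.Icc 0 r})
    (C : Set (EuclideanSpace ℝ (Fin d)))
    (hne : C.Nonempty) (hcl : IsClosed C) (hconv : Convex ℝ C) (hCH : C ⊆ H)
    (SH : Set (EuclideanSpace ℝ (Fin d))) (hfin : SH.Finite)
    (hSHsub : SH ⊆ frontier H)
    (hcover : ∀ x ∈ frontier H, ∃ s ∈ SH, ‖x - s‖ ≤ δ)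
    (f : EuclideanSpace ℝ (Fin d) → EuclideanSpace ℝ (Fin d))
    (hf : ∀ x, f x ∈ C ∧ ∀ y ∈ C, ‖x - f x‖ ≤ ‖x - y‖) :
    ∀ p ∈ frontier C, ∃ s ∈ SH, ‖p - f s‖ ≤ δ := by
  -- variational characterization of f
  have hvar : ∀ x, ∀ y ∈ C, ⟪x - f x, y - f x⟫_ℝ ≤ 0 := by
    intro x
    haveI : Nonempty C := ⟨⟨f x, (hf x).1⟩⟩
    have hbdd : BddBelow (Set.range fun w : C => ‖x - (w : EuclideanSpace ℝ (Fin d))‖) := by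
      refine ⟨0, ?_⟩; rintro _ ⟨w, rfl⟩; exact norm_nonneg _
    have heq : ‖x - f x‖ = ⨅ w : C, ‖x - (w : EuclideanSpace ℝ (Fin d))‖ := by
      refine le_antisymm (le_ciInf fun w => (hf x).2 w w.2) ?_
      exact ciInf_le hbdd ⟨f x, (hf x).1⟩
    exact (norm_eq_iInf_iff_real_inner_le_zero hconv (hf x).1).mp heq
  have hfix : ∀ p ∈ C, f p = p := by
    intro p hp
    have := (hf p).2 p hp
    simp only [sub_self, norm_zero] at this
    have : ‖p - f p‖ = 0 := le_antisymm this (norm_nonneg _)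
    have := norm_sub_eq_zero_iff.mp this
    exact this.symm
  intro p hp
  have hpC : p ∈ C := hcl.closure_subset hp.1
  -- step 1: find a unit outward normal v at p
  obtain ⟨v, hv1, hvn⟩ : ∃ v : EuclideanSpace ℝ (Fin d), ‖v‖ = 1 ∧
      ∀ y ∈ C, ⟪v, y - p⟫_ℝ ≤ 0 := by
    have hpc : p ∈ closure Cᶜ := by
      have h := hp
      rw [frontier_eq_closure_inter_closure] at h
      exact h.2
    obtain ⟨x, hxmem, hxlim⟩ := mem_closure_iff_seq_limit.mp hpc
    -- x n ∉ C, so x n ≠ f (x n)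
    have hne' : ∀ n, x n - f (x n) ≠ 0 := by
      intro n h
      exact hxmem n (by rw [sub_eq_zero.mp h]; exact (hf (x n)).1)
    set w : ℕ → EuclideanSpace ℝ (Fin d) := fun n => ‖x n - f (x n)‖⁻¹ • (x n - f (x n))
      with hw
    have hwsph : ∀ n, w n ∈ Metric.sphere (0 : EuclideanSpace ℝ (Fin d)) 1 := by
      intro n
      simp [hw, norm_smul, abs_inv, inv_mul_cancel₀ (norm_ne_zero_iff.mpr (hne' n))]
    obtain ⟨v, hvsph, φ, hφ, hvlim⟩ :=
      (isCompact_sphere (0 : EuclideanSpace ℝ (Fin d)) 1).tendsto_subseq hwsph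
    -- f (x n) → p
    have hflim : Filter.Tendsto (fun n => f (x n)) Filter.atTop (nhds p) := by
      rw [tendsto_iff_norm_sub_tendsto_zero]
      have hb : ∀ n, ‖f (x n) - p‖ ≤ ‖x n - p‖ := by
        intro n
        have := proj_aux_lip (x n) p (f (x n)) p (hf (x n)).1 hpC
          (fun y hy => hvar (x n) y hy)
          (fun y hy => by
            have : f p = p := hfix p hpC
            have h2 := hvar p y hy
            rwa [this] at h2)
        exact this
      have hx0 : Filter.Tendsto (fun n => ‖x n - p‖) Filter.atTop (nhds 0) := by
        rw [← tendsto_iff_norm_sub_tendsto_zero] ; exact hxlim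
      exact squeeze_zero (fun n => norm_nonneg _) hb hx0
    refine ⟨v, by simpa using hvsph, ?_⟩
    intro y hy
    have hterm : ∀ n, ⟪w (φ n), y - f (x (φ n))⟫_ℝ ≤ 0 := by
      intro n
      have h := hvar (x (φ n)) y hy
      have hpos : (0:ℝ) < ‖x (φ n) - f (x (φ n))‖ :=
        norm_pos_iff.mpr (hne' (φ n))
      rw [hw]
      simp only [real_inner_smul_left]
      exact mul_nonpos_of_nonneg_of_nonpos (le_of_lt (inv_pos.mpr hpos)) h
    have hlim : Filter.Tendsto (fun n => ⟪w (φ n), y - f (x (φ n))⟫_ℝ)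
        Filter.atTop (nhds ⟪v, y - p⟫_ℝ) := by
      have h2 : Filter.Tendsto (fun n => y - f (x (φ n))) Filter.atTop (nhds (y - p)) :=
        tendsto_const_nhds.sub (hflim.comp hφ.tendsto_atTop)
      exact hvlim.inner h2
    exact le_of_tendsto hlim (Filter.Eventually.of_forall hterm)
  have hvne : v ≠ 0 := by intro h; rw [h, norm_zero] at hv1; norm_num at hv1
  -- step 2: the ray p + t v hits the frontier of H
  set A : Set ℝ := {t | 0 ≤ t ∧ p + t • v ∈ H} with hA
  have h0A : (0:ℝ) ∈ A := ⟨le_refl _, by simpa using hCH hpC⟩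
  obtain ⟨i, hvi⟩ : ∃ i, v i ≠ 0 := by
    by_contra h
    push_neg at h
    exact hvne (PiLp.ext fun j => by simp [h j])
  have hbddA : BddAbove A := by
    refine ⟨r / |v i|, ?_⟩
    intro t ⟨ht0, htH⟩
    rw [hH] at htH
    have h1 := htH i
    have h2 : p i ∈ Set.Icc 0 r := by
      have := hCH hpC; rw [hH] at this; exact this i
    have habs : |t * v i| ≤ r := by
      have : (p + t • v) i = p i + t * v i := by
        rfl
      rw [this] at h1
      rw [abs_le]
      constructor <;> [linarith [h1.1, h2.2]; linarith [h1.2, h2.1]]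
    rw [abs_mul, abs_of_nonneg ht0] at habs
    rw [le_div_iff₀ (abs_pos.mpr hvi)]
    exact habs
  have hAclosed : IsClosed A := by
    have : A = Set.Ici 0 ∩ ((fun t : ℝ => p + t • v) ⁻¹' H) := by
      ext t; simp [hA, Set.mem_Ici, and_comm]
    rw [this]
    refine isClosed_Ici.inter (IsClosed.preimage (by continuity) ?_)
    rw [hH]
    have : {x : EuclideanSpace ℝ (Fin d) | ∀ i, x i ∈ Set.Icc 0 r}
        = ⋂ i, {x : EuclideanSpace ℝ (Fin d) | x i ∈ Set.Icc 0 r} := by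
      ext x; simp
    rw [this]
    exact isClosed_iInter fun i =>
      IsClosed.preimage ((continuous_apply i).comp (PiLp.continuous_ofLp 2 _)) isClosed_Icc
  set T := sSup A with hT
  have hTA : T ∈ A := hAclosed.csSup_mem ⟨0, h0A⟩ hbddA
  set s0 := p + T • v with hs0
  have hs0F : s0 ∈ frontier H := by
    constructor
    · exact subset_closure hTA.2
    · intro hint
      rw [mem_interior_iff_mem_nhds, Metric.mem_nhds_iff] at hint
      obtain ⟨ε, hε, hball⟩ := hint
      have hmem : p + (T + ε/2) • v ∈ H := by
        apply hball
        rw [Metric.mem_ball, dist_eq_norm]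
        have : p + (T + ε/2) • v - s0 = (ε/2) • v := by
          rw [hs0]; module
        rw [this, norm_smul, hv1, mul_one, Real.norm_eq_abs,
          abs_of_pos (half_pos hε)]
        linarith
      have : T + ε/2 ∈ A := ⟨by linarith [hTA.1], hmem⟩
      have := le_csSup hbddA this
      linarith
  -- step 3: f s0 = p
  have hps0 : ∀ y ∈ C, ⟪s0 - p, y - p⟫_ℝ ≤ 0 := by
    intro y hy
    have : s0 - p = T • v := by rw [hs0]; abel
    rw [this, real_inner_smul_left]
    exact mul_nonpos_of_nonneg_of_nonpos hTA.1 (hvn y hy)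
  have hfs0 : f s0 = p := by
    have h := proj_aux_lip s0 s0 (f s0) p (hf s0).1 hpC (hvar s0) hps0
    simp only [sub_self, norm_zero] at h
    have := norm_sub_eq_zero_iff.mp (le_antisymm h (norm_nonneg _))
    exact this
  -- step 4: conclude
  obtain ⟨s, hsSH, hsd⟩ := hcover s0 hs0F
  refine ⟨s, hsSH, ?_⟩
  calc ‖p - f s‖ = ‖f s0 - f s‖ := by rw [hfs0]
    _ ≤ ‖s0 - s‖ := proj_aux_lip s0 s (f s0) (f s) (hf s0).1 (hf s).1 (hvar s0) (hvar s)
    _ ≤ δ := hsd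
end
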